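/- Let F(X) = −log det(X) on d×d positive definite matrices, with Bregman divergence D(G,H) = F(G) − F(H) − ⟨∇F(H), G − H⟩ = log(det(H)/det(G)) + tr(H^{-1}(G−H)). For lifted matrices 𝐆 = [[G+gg^T, g],[g^T, 1]] and 𝐇 = [[H+hh^T, h],[h^T, 1]] with G, H positive definite, D(𝐆,𝐇) = D(G,H) + ‖g−h‖²_{H^{-1}}; in particular D(𝐆,𝐇) ≥ ‖g−h‖²_{H^{-1}}. -/

import Mathlib

open Matrix

section helpers

variable {d : ℕ}

lemma trace_fromBlocks' {l m : Type*} [Fintype l] [Fintype m]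
    (A : Matrix l l ℝ) (B : Matrix l m ℝ) (C : Matrix m l ℝ) (D : Matrix m m ℝ) :
    (fromBlocks A B C D).trace = A.trace + D.trace := by
  simp [Matrix.trace, Matrix.diag, Fintype.sum_sum_type, fromBlocks]

lemma trace_mul_vecMulVec' (A : Matrix (Fin d) (Fin d) ℝ) (u v : Fin d → ℝ) :
    (A * vecMulVec u v).trace = (A *ᵥ u) ⬝ᵥ v := by
  rw [vecMulVec_eq (Fin 1), ← Matrix.mul_assoc, ← replicateCol_mulVec, trace_replicateCol_mul_replicateRow]

lemma smul_one_one (c : ℝ) : c • (1 : Matrix (Fin 1) (Fin 1) ℝ) = of fun _ _ => c := by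
  ext i j; fin_cases i; fin_cases j; simp

lemma vecMulVec_eq_fin (u v : Fin d → ℝ) :
    vecMulVec u v = replicateCol (Fin 1) u * replicateRow (Fin 1) v := vecMulVec_eq (Fin 1) u v

lemma trace_col_mul_row_fin (a b : Fin d → ℝ) :
    (replicateCol (Fin 1) a * replicateRow (Fin 1) b).trace = a ⬝ᵥ b :=
  trace_replicateCol_mul_replicateRow a b

lemma transpose_eq_of_herm {H : Matrix (Fin d) (Fin d) ℝ} (hH : H.IsHermitian) : Hᵀ = H := hH

lemma inv_symm {H : Matrix (Fin d) (Fin d) ℝ} (hH : H.PosDef) : (H⁻¹)ᵀ = H⁻¹ :=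
  transpose_eq_of_herm hH.inv.isHermitian

lemma lifted_inv {H : Matrix (Fin d) (Fin d) ℝ} (hH : H.PosDef) (h : Fin d → ℝ) :
    (fromBlocks (H + vecMulVec h h) (replicateCol (Fin 1) h) (replicateRow (Fin 1) h)
        (1 : Matrix (Fin 1) (Fin 1) ℝ))⁻¹
      = fromBlocks H⁻¹ (-(replicateCol (Fin 1) (H⁻¹ *ᵥ h))) (-(replicateRow (Fin 1) (H⁻¹ *ᵥ h)))
          ((1 + h ⬝ᵥ (H⁻¹ *ᵥ h)) • (1 : Matrix (Fin 1) (Fin 1) ℝ)) := by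
  have hdet : IsUnit H.det := hH.det_pos.ne'.isUnit
  have hHH : H * H⁻¹ = 1 := mul_nonsing_inv H hdet
  set w : Fin d → ℝ := H⁻¹ *ᵥ h with hw
  have hvm : h ᵥ* H⁻¹ = w := by
    rw [hw, ← vecMul_transpose, inv_symm hH]
  have hmv : H *ᵥ w = h := by rw [hw, mulVec_mulVec, hHH, one_mulVec]
  apply inv_eq_right_inv
  rw [fromBlocks_multiply]
  have b11 : (H + vecMulVec h h) * H⁻¹ + replicateCol (Fin 1) h * (-(replicateRow (Fin 1) w)) = 1 := by
    rw [add_mul, hHH, vecMulVec_eq_fin, Matrix.mul_assoc, ← replicateRow_vecMul, hvm,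
      Matrix.mul_neg]
    abel
  have b12 : (H + vecMulVec h h) * (-(replicateCol (Fin 1) w))
      + replicateCol (Fin 1) h * ((1 + h ⬝ᵥ w) • (1 : Matrix (Fin 1) (Fin 1) ℝ)) = 0 := by
    rw [Matrix.mul_neg, Matrix.add_mul, ← replicateCol_mulVec, hmv, vecMulVec_eq (Fin 1),
      Matrix.mul_assoc, replicateRow_mul_replicateCol, ← smul_one_one, Matrix.mul_smul, Matrix.mul_one,
      Matrix.mul_smul, Matrix.mul_one, add_smul, one_smul]
    abel
  have b21 : replicateRow (Fin 1) h * H⁻¹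
      + (1 : Matrix (Fin 1) (Fin 1) ℝ) * (-(replicateRow (Fin 1) w)) = 0 := by
    rw [← replicateRow_vecMul, hvm, Matrix.one_mul]
    abel
  have b22 : replicateRow (Fin 1) h * (-(replicateCol (Fin 1) w))
      + (1 : Matrix (Fin 1) (Fin 1) ℝ) * ((1 + h ⬝ᵥ w) • (1 : Matrix (Fin 1) (Fin 1) ℝ)) = 1 := by
    rw [Matrix.mul_neg, replicateRow_mul_replicateCol, ← smul_one_one, Matrix.one_mul, add_smul, one_smul]
    abel
  rw [b11, b12, b21, b22, fromBlocks_one]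

lemma lifted_det {H : Matrix (Fin d) (Fin d) ℝ} (h : Fin d → ℝ) :
    (fromBlocks (H + vecMulVec h h) (replicateCol (Fin 1) h) (replicateRow (Fin 1) h)
        (1 : Matrix (Fin 1) (Fin 1) ℝ)).det = H.det := by
  rw [det_fromBlocks_one₂₂, ← vecMulVec_eq_fin, add_sub_cancel_right]

end helpers

lemma transpose_eq_of_herm' {d : ℕ} {H : Matrix (Fin d) (Fin d) ℝ} (hH : H.IsHermitian) :
    Hᵀ = H := hH

lemma bregman_nonneg {d : ℕ} {G H : Matrix (Fin d) (Fin d) ℝ}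
    (hG : G.PosDef) (hH : H.PosDef) :
    0 ≤ Real.log (H.det / G.det) + (H⁻¹ * G).trace - d := by
  obtain ⟨S, hS_psd, hS2⟩ : ∃ S : Matrix (Fin d) (Fin d) ℝ, S.PosSemidef ∧ S * S = H :=
    by open scoped MatrixOrder in exact ⟨CFC.sqrt H, Matrix.nonneg_iff_posSemidef.mp (CFC.sqrt_nonneg H),
      CFC.sqrt_mul_sqrt_self H (Matrix.nonneg_iff_posSemidef.mpr hH.posSemidef)⟩
  have hdetS : S.det ≠ 0 := by
    intro h0
    have : H.det = 0 := by rw [← hS2, det_mul, h0, zero_mul]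
    exact hH.det_pos.ne' this
  have hSu : IsUnit S.det := hdetS.isUnit
  have hSS : S * S⁻¹ = 1 := mul_nonsing_inv S hSu
  have hSS' : S⁻¹ * S = 1 := nonsing_inv_mul S hSu
  have hSsym : Sᵀ = S := transpose_eq_of_herm' hS_psd.isHermitian
  have hSinvsym : (S⁻¹)ᵀ = S⁻¹ := by rw [transpose_nonsing_inv, hSsym]
  have hGsym : Gᵀ = G := transpose_eq_of_herm' hG.isHermitian
  set A : Matrix (Fin d) (Fin d) ℝ := S⁻¹ * G * S⁻¹ with hA
  have hA_pd : A.PosDef := by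
    refine Matrix.PosDef.of_dotProduct_mulVec_pos ?_ ?_
    · show Aᴴ = A
      have : Aᴴ = Aᵀ := rfl
      rw [this, hA, transpose_mul, transpose_mul, hSinvsym, hGsym, Matrix.mul_assoc]
    · intro x hx
      have hx' : S⁻¹ *ᵥ x ≠ 0 := by
        intro h0
        apply hx
        have := congrArg (fun v => S *ᵥ v) h0
        simpa [mulVec_mulVec, hSS] using this
      have key : star x ⬝ᵥ A *ᵥ x = star (S⁻¹ *ᵥ x) ⬝ᵥ G *ᵥ (S⁻¹ *ᵥ x) := by
        have : A *ᵥ x = S⁻¹ *ᵥ (G *ᵥ (S⁻¹ *ᵥ x)) := by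
          rw [hA, ← mulVec_mulVec, ← mulVec_mulVec]
        rw [this]
        show x ⬝ᵥ S⁻¹ *ᵥ (G *ᵥ (S⁻¹ *ᵥ x)) = (S⁻¹ *ᵥ x) ⬝ᵥ G *ᵥ (S⁻¹ *ᵥ x)
        rw [dotProduct_mulVec x S⁻¹, ← mulVec_transpose, hSinvsym]
      rw [key]
      exact hG.dotProduct_mulVec_pos hx'
  have hA_herm := hA_pd.isHermitian
  set e : Fin d → ℝ := hA_herm.eigenvalues with he
  have he_pos : ∀ i, 0 < e i := fun i => hA_pd.eigenvalues_pos i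
  have hdetA : A.det = ∏ i, e i := by
    have := hA_herm.det_eq_prod_eigenvalues
    simpa using this
  have htrA : A.trace = ∑ i, e i := by
    have hspec := hA_herm.spectral_theorem
    have hUU : (star hA_herm.eigenvectorUnitary : Matrix (Fin d) (Fin d) ℝ)
        * (hA_herm.eigenvectorUnitary : Matrix (Fin d) (Fin d) ℝ) = 1 :=
      Unitary.coe_star_mul_self hA_herm.eigenvectorUnitary
    calc A.trace
        = ((hA_herm.eigenvectorUnitary : Matrix (Fin d) (Fin d) ℝ)
            * (diagonal (RCLike.ofReal ∘ e)
            * (star hA_herm.eigenvectorUnitary : Matrix (Fin d) (Fin d) ℝ))).trace := by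
          rw [← Matrix.mul_assoc]
          conv_lhs => rw [hspec, Unitary.conjStarAlgAut_apply]
      _ = ((diagonal (RCLike.ofReal ∘ e)
            * (star hA_herm.eigenvectorUnitary : Matrix (Fin d) (Fin d) ℝ))
            * (hA_herm.eigenvectorUnitary : Matrix (Fin d) (Fin d) ℝ)).trace :=
          trace_mul_comm _ _
      _ = (diagonal (RCLike.ofReal ∘ e)).trace := by
          rw [Matrix.mul_assoc, hUU, Matrix.mul_one]
      _ = ∑ i, e i := by simp [Matrix.trace_diagonal]
  have hdetA' : A.det = G.det / H.det := by
    have h1 : A.det = S⁻¹.det * G.det * S⁻¹.det := by rw [hA, det_mul, det_mul]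
    have h2 : S⁻¹.det = (S.det)⁻¹ := by
      rw [det_nonsing_inv, Ring.inverse_eq_inv']
    have h3 : H.det = S.det * S.det := by rw [← hS2, det_mul]
    rw [h1, h2, h3]
    field_simp
  have htrHG : (H⁻¹ * G).trace = A.trace := by
    have : H⁻¹ = S⁻¹ * S⁻¹ := by rw [← hS2, Matrix.mul_inv_rev]
    rw [this, Matrix.mul_assoc, trace_mul_comm, hA, Matrix.mul_assoc]
  have hlog : Real.log (H.det / G.det) = -∑ i, Real.log (e i) := by
    have hAdet_ne : A.det = ∏ i, e i := hdetA
    have : H.det / G.det = (∏ i, e i)⁻¹ := by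
      rw [← hAdet_ne, hdetA']
      rw [inv_div]
    rw [this, Real.log_inv, Real.log_prod (fun i _ => (he_pos i).ne')]
  rw [hlog, htrHG, htrA]
  have hcard : (d : ℝ) = ∑ _i : Fin d, (1 : ℝ) := by simp
  rw [hcard]
  have : -∑ i, Real.log (e i) + ∑ i, e i - ∑ _i : Fin d, (1 : ℝ)
      = ∑ i, (e i - Real.log (e i) - 1) := by
    rw [Finset.sum_sub_distrib, Finset.sum_sub_distrib]
    ring
  rw [this]
  apply Finset.sum_nonneg
  intro i _
  have := Real.log_le_sub_one_of_pos (he_pos i)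
  linarith

lemma trace_row_mul_col' {d : ℕ} (v u : Fin d → ℝ) :
    (replicateRow (Fin 1) v * replicateCol (Fin 1) u).trace = v ⬝ᵥ u := by
  rw [trace_mul_comm, trace_col_mul_row_fin, dotProduct_comm]

lemma lifted_trace {d : ℕ} {G H : Matrix (Fin d) (Fin d) ℝ} (hH : H.PosDef)
    (g h : Fin d → ℝ) :
    ((fromBlocks (H + vecMulVec h h) (replicateCol (Fin 1) h) (replicateRow (Fin 1) h)
        (1 : Matrix (Fin 1) (Fin 1) ℝ))⁻¹ *
      (fromBlocks (G + vecMulVec g g) (replicateCol (Fin 1) g) (replicateRow (Fin 1) g)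
        (1 : Matrix (Fin 1) (Fin 1) ℝ))).trace
      = (H⁻¹ * G).trace + 1 + (g - h) ⬝ᵥ (H⁻¹ *ᵥ (g - h)) := by
  have hvm : ∀ v : Fin d → ℝ, v ᵥ* H⁻¹ = H⁻¹ *ᵥ v := fun v => by
    rw [← vecMul_transpose, inv_symm hH]
  have hsymm : h ⬝ᵥ (H⁻¹ *ᵥ g) = g ⬝ᵥ (H⁻¹ *ᵥ h) := by
    rw [dotProduct_mulVec, hvm, dotProduct_comm]
  rw [lifted_inv hH h, fromBlocks_multiply, trace_fromBlocks']
  rw [Matrix.mul_add, Matrix.neg_mul, Matrix.neg_mul, Matrix.mul_one]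
  rw [trace_add, trace_add, trace_add, trace_neg, trace_neg, trace_smul,
    trace_mul_vecMulVec', trace_col_mul_row_fin, trace_row_mul_col', trace_one]
  have hq : (g - h) ⬝ᵥ (H⁻¹ *ᵥ (g - h))
      = g ⬝ᵥ (H⁻¹ *ᵥ g) - g ⬝ᵥ (H⁻¹ *ᵥ h) - h ⬝ᵥ (H⁻¹ *ᵥ g) + h ⬝ᵥ (H⁻¹ *ᵥ h) := by
    rw [mulVec_sub, dotProduct_sub, sub_dotProduct, sub_dotProduct]
    ring
  have e1 : (H⁻¹ *ᵥ g) ⬝ᵥ g = g ⬝ᵥ (H⁻¹ *ᵥ g) := dotProduct_comm _ _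
  have e2 : (H⁻¹ *ᵥ h) ⬝ᵥ g = g ⬝ᵥ (H⁻¹ *ᵥ h) := dotProduct_comm _ _
  have e3 : g ⬝ᵥ (H⁻¹ *ᵥ h) = g ⬝ᵥ (H⁻¹ *ᵥ h) := rfl
  simp only [Fintype.card_fin, smul_eq_mul, mul_one]
  rw [hq, e1, e2, hsymm]
  ring

theorem lifted_bregman_identity {d : ℕ} (G H : Matrix (Fin d) (Fin d) ℝ)
    (g h : Fin d → ℝ) (hG : G.PosDef) (hH : H.PosDef) :
    (Real.log ((fromBlocks (H + vecMulVec h h) (replicateCol (Fin 1) h) (replicateRow (Fin 1) h)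
          (1 : Matrix (Fin 1) (Fin 1) ℝ)).det /
        (fromBlocks (G + vecMulVec g g) (replicateCol (Fin 1) g) (replicateRow (Fin 1) g)
          (1 : Matrix (Fin 1) (Fin 1) ℝ)).det)
      + ((fromBlocks (H + vecMulVec h h) (replicateCol (Fin 1) h) (replicateRow (Fin 1) h)
          (1 : Matrix (Fin 1) (Fin 1) ℝ))⁻¹ *
         (fromBlocks (G + vecMulVec g g) (replicateCol (Fin 1) g) (replicateRow (Fin 1) g)
          (1 : Matrix (Fin 1) (Fin 1) ℝ))).trace - (d + 1)
      = (Real.log (H.det / G.det) + (H⁻¹ * G).trace - d)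
        + (g - h) ⬝ᵥ (H⁻¹ *ᵥ (g - h)))
    ∧ (g - h) ⬝ᵥ (H⁻¹ *ᵥ (g - h))
      ≤ Real.log ((fromBlocks (H + vecMulVec h h) (replicateCol (Fin 1) h) (replicateRow (Fin 1) h)
          (1 : Matrix (Fin 1) (Fin 1) ℝ)).det /
        (fromBlocks (G + vecMulVec g g) (replicateCol (Fin 1) g) (replicateRow (Fin 1) g)
          (1 : Matrix (Fin 1) (Fin 1) ℝ)).det)
      + ((fromBlocks (H + vecMulVec h h) (replicateCol (Fin 1) h) (replicateRow (Fin 1) h)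
          (1 : Matrix (Fin 1) (Fin 1) ℝ))⁻¹ *
         (fromBlocks (G + vecMulVec g g) (replicateCol (Fin 1) g) (replicateRow (Fin 1) g)
          (1 : Matrix (Fin 1) (Fin 1) ℝ))).trace - (d + 1) := by
  have key : Real.log ((fromBlocks (H + vecMulVec h h) (replicateCol (Fin 1) h) (replicateRow (Fin 1) h)
          (1 : Matrix (Fin 1) (Fin 1) ℝ)).det /
        (fromBlocks (G + vecMulVec g g) (replicateCol (Fin 1) g) (replicateRow (Fin 1) g)
          (1 : Matrix (Fin 1) (Fin 1) ℝ)).det)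
      + ((fromBlocks (H + vecMulVec h h) (replicateCol (Fin 1) h) (replicateRow (Fin 1) h)
          (1 : Matrix (Fin 1) (Fin 1) ℝ))⁻¹ *
         (fromBlocks (G + vecMulVec g g) (replicateCol (Fin 1) g) (replicateRow (Fin 1) g)
          (1 : Matrix (Fin 1) (Fin 1) ℝ))).trace - (d + 1)
      = (Real.log (H.det / G.det) + (H⁻¹ * G).trace - d)
        + (g - h) ⬝ᵥ (H⁻¹ *ᵥ (g - h)) := by
    rw [lifted_det h, lifted_det g, lifted_trace hH g h]
    ring
  refine ⟨key, ?_⟩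
  rw [key]
  have h0 := bregman_nonneg hG hH
  linarith
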